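/- Let n = 2m and let a₁,…,a_{n−1} be real numbers such that the polynomial f(x) = ∏_{i=1}^{n−1}(x − a_i) has all real roots, and assume moreover that for some real a_n the roots b₁,…,b_m of g(x) := f^{(m−1)}(x) satisfy the conclusion of Rolle iterations from the full polynomial f(x)(x − a_n) having all positive coefficients. Then (n−1)·σ_m(a₁,…,a_{n−1}) ≤ σ₁(a₁,…,a_{n−1})·σ_{m−1}(a₁,…,a_{n−1}) is equivalent to m²·σ_m(b₁,…,b_m) ≤ σ₁(b₁,…,b_m)·σ_{m−1}(b₁,…,b_m). -/
import Mathlib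


open Finset Polynomial

/-- The `k`-th elementary symmetric polynomial of `x : Fin n → ℝ`. -/
noncomputable def esymm {n : ℕ} (k : ℕ) (x : Fin n → ℝ) : ℝ :=
  ∑ s ∈ Finset.univ.powersetCard k, ∏ i ∈ s, x i

/-- `σ_{k;i}`: the `k`-th elementary symmetric polynomial with the `i`-th entry set to `0`. -/
noncomputable def esymmAt {n : ℕ} (k : ℕ) (i : Fin n) (x : Fin n → ℝ) : ℝ :=
  esymm k (Function.update x i 0)

lemma esymm_eq_multiset {N : ℕ} (k : ℕ) (x : Fin N → ℝ) :
    ((Finset.univ.val.map x).esymm k) = esymm k x := by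
  rw [Finset.esymm_map_val]; rfl

lemma coeff_prod_X_sub_C {N : ℕ} (x : Fin N → ℝ) {k : ℕ} (hk : k ≤ N) :
    (∏ i, (X - C (x i))).coeff (N - k) = (-1) ^ k * esymm k x := by
  have hprod : (∏ i, (X - C (x i))) =
      ((Finset.univ.val.map x).map fun t => X - C t).prod := by
    rw [Multiset.map_map]; rfl
  have hcard : Multiset.card (Finset.univ.val.map x) = N := by simp
  rw [hprod, Multiset.prod_X_sub_C_coeff _ (by omega : N - k ≤ Multiset.card (Finset.univ.val.map x)),
    hcard, Nat.sub_sub_self hk, esymm_eq_multiset]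

lemma esymm_zero_eq_one {N : ℕ} (x : Fin N → ℝ) : esymm 0 x = 1 := by
  simp [esymm]

lemma descFactorial_identity (p : ℕ) :
    (2 * (p + 1) - 1) * ((2 * (p + 1) - 2).descFactorial p) * ((p + 1).descFactorial p)
      = (p + 1) ^ 2 * ((2 * (p + 1) - 1).descFactorial p) * (p.descFactorial p) := by
  rw [show 2 * (p + 1) - 1 = 2 * p + 1 by omega, show 2 * (p + 1) - 2 = 2 * p by omega]
  have A : (2 * p + 1) * (2 * p).descFactorial p = (p + 1) * (2 * p + 1).descFactorial p := by
    rw [← Nat.succ_descFactorial_succ, Nat.descFactorial_succ,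
      show 2 * p + 1 - p = p + 1 by omega]
  have B : (p + 1).descFactorial p = (p + 1) * p.descFactorial p := by
    have h1 := Nat.succ_descFactorial_succ p p
    have h2 := Nat.descFactorial_succ (p + 1) p
    rw [show p + 1 - p = 1 by omega, one_mul] at h2
    rw [← h2, h1]
  calc (2 * p + 1) * (2 * p).descFactorial p * ((p + 1).descFactorial p)
      = ((2 * p + 1) * (2 * p).descFactorial p) * ((p + 1) * p.descFactorial p) := by rw [B]
    _ = ((p + 1) * (2 * p + 1).descFactorial p) * ((p + 1) * p.descFactorial p) := by rw [A]
    _ = (p + 1) ^ 2 * (2 * p + 1).descFactorial p * p.descFactorial p := by ring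

/-- For `n = 2m`, if `b₁,…,b_m` are the roots of the `(m-1)`-st derivative of
`f(x) = ∏_{i=1}^{n-1}(x - aᵢ)`, then the inequality `(n-1)σ_m(a) ≤ σ₁(a)σ_{m-1}(a)` is
equivalent to `m²σ_m(b) ≤ σ₁(b)σ_{m-1}(b)`. -/
theorem ineq_equiv_of_derivative_roots {m : ℕ} (hm : 1 ≤ m) (n : ℕ) (hn : n = 2 * m)
    (a : Fin (n - 1) → ℝ) (b : Fin m → ℝ) (c : ℝ) (hc : c ≠ 0)
    (hder : (Polynomial.derivative)^[m - 1] (∏ i, (X - C (a i)))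
      = C c * ∏ i, (X - C (b i))) :
    (((n : ℝ) - 1) * esymm m a ≤ esymm 1 a * esymm (m - 1) a) ↔
      ((m : ℝ) ^ 2 * esymm m b ≤ esymm 1 b * esymm (m - 1) b) := by
  have hN : n - 1 = 2 * m - 1 := by omega
  -- relation from coefficients
  have hrel : ∀ k, k ≤ m →
      (((2 * m - 1 - k).descFactorial (m - 1) : ℝ)) * esymm k a = c * esymm k b := by
    intro k hk
    have h := congrArg (fun p => Polynomial.coeff p (m - k)) hder
    simp only [Polynomial.coeff_C_mul] at h
    rw [Polynomial.coeff_iterate_derivative] at h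
    have he1 : m - k + (m - 1) = 2 * m - 1 - k := by omega
    have hfa : (∏ i, (X - C (a i))).coeff (m - k + (m - 1)) = (-1) ^ k * esymm k a := by
      rw [he1, show (2 * m - 1 - k) = (n - 1) - k by omega]
      exact coeff_prod_X_sub_C a (by omega)
    have hfb : (∏ i, (X - C (b i))).coeff (m - k) = (-1) ^ k * esymm k b := by
      rw [show m - k = m - k from rfl]
      exact coeff_prod_X_sub_C b hk
    rw [hfa, hfb, he1] at h
    have hne : ((-1 : ℝ)) ^ k ≠ 0 := pow_ne_zero _ (by norm_num)
    apply mul_left_cancel₀ hne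
    rw [nsmul_eq_mul] at h
    ring_nf
    ring_nf at h
    linarith [h]
  -- k = 0 determines c
  have hc0 : (((2 * m - 1).descFactorial (m - 1) : ℝ)) = c := by
    have := hrel 0 (Nat.zero_le _)
    simpa [esymm_zero_eq_one] using this
  set d0 : ℕ := (2 * m - 1).descFactorial (m - 1) with hd0
  set d1 : ℕ := (2 * m - 2).descFactorial (m - 1) with hd1
  set dm1 : ℕ := m.descFactorial (m - 1) with hdm1
  set dm : ℕ := (m - 1).descFactorial (m - 1) with hdm
  have h1 : (d1 : ℝ) * esymm 1 a = c * esymm 1 b := by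
    have := hrel 1 hm
    rwa [show 2 * m - 1 - 1 = 2 * m - 2 by omega] at this
  have hm1 : (dm1 : ℝ) * esymm (m - 1) a = c * esymm (m - 1) b := by
    have := hrel (m - 1) (by omega)
    rwa [show 2 * m - 1 - (m - 1) = m by omega] at this
  have hmm : (dm : ℝ) * esymm m a = c * esymm m b := by
    have := hrel m le_rfl
    rwa [show 2 * m - 1 - m = m - 1 by omega] at this
  -- numeric identity
  have hId : (2 * m - 1) * d1 * dm1 = m ^ 2 * d0 * dm := by
    have h := descFactorial_identity (m - 1)
    rw [show m - 1 + 1 = m by omega] at h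
    exact h
  -- positivity
  have hp : ∀ N : ℕ, m - 1 ≤ N → 0 < N.descFactorial (m - 1) := fun N h =>
    Nat.pos_of_ne_zero (fun h0 => by
      rw [Nat.descFactorial_eq_zero_iff_lt] at h0; omega)
  have hpd1 : (0 : ℝ) < d1 := by exact_mod_cast hp _ (by omega)
  have hpdm1 : (0 : ℝ) < dm1 := by exact_mod_cast hp _ (by omega)
  have hpdm : (0 : ℝ) < dm := by exact_mod_cast hp _ (by omega)
  have hpd0 : (0 : ℝ) < d0 := by exact_mod_cast hp _ (by omega)
  have hIdR : ((2 * m - 1 : ℕ) : ℝ) * d1 * dm1 = (m : ℝ) ^ 2 * d0 * dm := by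
    exact_mod_cast congrArg (Nat.cast : ℕ → ℝ) hId
  have hnr : ((n : ℝ) - 1) = ((2 * m - 1 : ℕ) : ℝ) := by
    subst hn; push_cast [Nat.cast_sub (by omega : 1 ≤ 2 * m)]; ring
  -- main identity
  have E : (d1 : ℝ) * dm1 * (esymm 1 a * esymm (m - 1) a - ((2 * m - 1 : ℕ) : ℝ) * esymm m a)
      = (d0 : ℝ) ^ 2 * (esymm 1 b * esymm (m - 1) b - (m : ℝ) ^ 2 * esymm m b) := by
    rw [← hc0] at h1 hm1 hmm
    linear_combination ((d1 : ℝ) * esymm 1 a) * hm1 + ((d0 : ℝ) * esymm (m - 1) b) * h1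
      - ((m : ℝ) ^ 2 * d0) * hmm - esymm m a * hIdR
  rw [hnr]
  constructor
  · intro h
    have h' : (0 : ℝ) ≤ (d0 : ℝ) ^ 2 * (esymm 1 b * esymm (m - 1) b - (m : ℝ) ^ 2 * esymm m b) := by
      rw [← E]
      exact mul_nonneg (mul_pos hpd1 hpdm1).le (by linarith)
    nlinarith [sq_nonneg (d0 : ℝ), mul_pos hpd0 hpd0]
  · intro h
    have h' : (0 : ℝ) ≤ (d1 : ℝ) * dm1 *
        (esymm 1 a * esymm (m - 1) a - ((2 * m - 1 : ℕ) : ℝ) * esymm m a) := by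
      rw [E]
      exact mul_nonneg (by positivity) (by linarith)
    nlinarith [mul_pos hpd1 hpdm1]
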